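/- Let f : ℂⁿ → ℂ be a Newton non-degenerate mixed polynomial and let I ⊆ {1,…,n} be nonempty such that the restriction f^I of f to ℂ^I := {z ∈ ℂⁿ | z_j = 0 for all j ∉ I} is not identically zero. Then (1) f^I, viewed as a mixed polynomial in the variables z_i with i ∈ I, is Newton non-degenerate, and (2) Γ⁺(f^I) = Γ⁺(f) ∩ ℝ^I_{≥0}, where Γ⁺ denotes the union of the faces of Γ₀ not containing 0 and ℝ^I_{≥0} = {x ∈ ℝⁿ | x_j = 0 for j ∉ I and x_i ≥ 0 for all i}. -/

import Mathlib

open Complex Filter Finset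

noncomputable section

abbrev MixedCoeff (n : ℕ) := ((Fin n → ℕ) × (Fin n → ℕ)) →₀ ℂ

namespace Mixed

variable {n : ℕ}

/-- Evaluation of a mixed polynomial given by its coefficient function `c`:
`f(z) = Σ c(ν,μ) zᵛ z̄ᵘ`. -/
def eval (c : MixedCoeff n) (z : Fin n → ℂ) : ℂ :=
  c.sum fun p a => a * (∏ i, z i ^ p.1 i) * ∏ i, (starRingEnd ℂ) (z i) ^ p.2 i

/-- `∂f/∂z_i` evaluated at `(z, z̄)`. -/
def dz (c : MixedCoeff n) (i : Fin n) (z : Fin n → ℂ) : ℂ :=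
  c.sum fun p a => a * (p.1 i) * (∏ j, z j ^ (p.1 j - if j = i then 1 else 0)) *
    ∏ j, (starRingEnd ℂ) (z j) ^ p.2 j

/-- `∂f/∂z̄_i` evaluated at `(z, z̄)`. -/
def dzbar (c : MixedCoeff n) (i : Fin n) (z : Fin n → ℂ) : ℂ :=
  c.sum fun p a => a * (p.2 i) * (∏ j, z j ^ p.1 j) *
    ∏ j, (starRingEnd ℂ) (z j) ^ (p.2 j - if j = i then 1 else 0)

/-- The singular locus of `f` as a real map `ℝ²ⁿ → ℝ²`. -/
def Sing (c : MixedCoeff n) : Set (Fin n → ℂ) :=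
  {z | ¬ Function.Surjective ⇑(fderiv ℝ (eval c) z)}

/-- The Milnor set `M(f)`. -/
def Milnor (c : MixedCoeff n) : Set (Fin n → ℂ) :=
  {z | ∃ (l : ℝ) (m : ℂ), m ≠ 0 ∧
    ∀ i, (l : ℂ) * z i = m * (starRingEnd ℂ) (dz c i z) + (starRingEnd ℂ) m * dzbar c i z}

/-- The set `S(f)` of asymptotic ρ-nonregular values. -/
def Sset (c : MixedCoeff n) : Set ℂ :=
  {v | ∃ zk : ℕ → (Fin n → ℂ), (∀ k, zk k ∈ Milnor c) ∧
    Tendsto (fun k => ‖zk k‖) atTop atTop ∧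
    Tendsto (fun k => eval c (zk k)) atTop (nhds v)}

/-- The point of `ℝⁿ` attached to the exponent pair `(ν,μ)`, namely `ν+μ`. -/
def suppPt (p : (Fin n → ℕ) × (Fin n → ℕ)) : Fin n → ℝ := fun i => ((p.1 i + p.2 i : ℕ) : ℝ)

/-- The support of `f`, as a subset of `ℝⁿ`. -/
def suppPts (c : MixedCoeff n) : Set (Fin n → ℝ) := suppPt '' (c.support : Set _)

/-- The Newton polyhedron `Γ₀(f)`: convex hull of `{0} ∪ supp(f)`. -/
def Gamma0 (c : MixedCoeff n) : Set (Fin n → ℝ) := convexHull ℝ (insert 0 (suppPts c))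

/-- `supp(f)‾`: the convex hull of `supp(f) \ {0}`. -/
def suppBar (c : MixedCoeff n) : Set (Fin n → ℝ) := convexHull ℝ (suppPts c \ {0})

/-- `F` is a face of the (compact convex) set `C`: either `C` itself or the set of
minimizers on `C` of a linear functional, and nonempty. -/
def IsFaceOf (C F : Set (Fin n → ℝ)) : Prop :=
  F.Nonempty ∧ (F = C ∨ ∃ a : Fin n → ℝ,
    F = {x ∈ C | ∀ y ∈ C, ∑ i, a i * x i ≤ ∑ i, a i * y i})

/-- `Δ` is a face of the Newton boundary at infinity `Γ⁺(f)`: a face of `Γ₀(f)` not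
containing the origin. -/
def IsGammaPlusFace (c : MixedCoeff n) (Δ : Set (Fin n → ℝ)) : Prop :=
  IsFaceOf (Gamma0 c) Δ ∧ (0 : Fin n → ℝ) ∉ Δ

/-- `Γ⁺(f)` as a subset of `ℝⁿ`: the union of the faces of `Γ₀(f)` not containing `0`. -/
def GammaPlusSet (c : MixedCoeff n) : Set (Fin n → ℝ) :=
  {x | ∃ Δ, IsGammaPlusFace c Δ ∧ x ∈ Δ}

/-- The truncation `f_Δ` of `f` to a subset `Δ ⊆ ℝⁿ`. -/
def trunc (c : MixedCoeff n) (Δ : Set (Fin n → ℝ)) : MixedCoeff n :=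
  @Finsupp.filter _ _ _ (fun p => suppPt p ∈ Δ) (Classical.decPred _) c

/-- Newton non-degeneracy: for every face `Δ` of `Γ⁺(f)`,
`Sing f_Δ ∩ f_Δ⁻¹(0) ∩ (ℂ*)ⁿ = ∅`. -/
def NewtonNonDeg (c : MixedCoeff n) : Prop :=
  ∀ Δ, IsGammaPlusFace c Δ → ∀ z : Fin n → ℂ, (∀ i, z i ≠ 0) →
    eval (trunc c Δ) z = 0 → z ∉ Sing (trunc c Δ)

/-- Newton strong non-degeneracy: for every face `Δ` of `Γ⁺(f)`,
`Sing f_Δ ∩ (ℂ*)ⁿ = ∅`. -/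
def NewtonStronglyNonDeg (c : MixedCoeff n) : Prop :=
  ∀ Δ, IsGammaPlusFace c Δ → ∀ z : Fin n → ℂ, (∀ i, z i ≠ 0) →
    z ∉ Sing (trunc c Δ)

/-- `Δ` is a bad face of `supp(f)‾`. -/
def IsBadFace (c : MixedCoeff n) (Δ : Set (Fin n → ℝ)) : Prop :=
  IsFaceOf (suppBar c) Δ ∧ (0 : Fin n → ℝ) ∈ affineSpan ℝ Δ ∧
    ∃ a : Fin n → ℝ, (∃ i, a i < 0) ∧ (∃ j, 0 < a j) ∧
      {x ∈ suppBar c | ∑ i, a i * x i = 0} = Δ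

/-- `f` depends effectively on all its variables. -/
def EffectiveAll (c : MixedCoeff n) : Prop :=
  ∀ i, ∃ p ∈ c.support, 0 < p.1 i + p.2 i

/-- The Euclidean norm on `ℂⁿ`. -/
def norm2 (v : Fin n → ℂ) : ℝ := Real.sqrt (∑ i, Complex.normSq (v i))

end Mixed

/-- The coordinate subspace `ℂ^I = {z | z_j = 0 for j ∉ I}` as a real submodule of `ℂⁿ`. -/
def coordSubspace {n : ℕ} (I : Finset (Fin n)) : Submodule ℝ (Fin n → ℂ) :=
  Submodule.pi ((↑I)ᶜ : Set (Fin n)) (fun _ => (⊥ : Submodule ℝ ℂ))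

namespace NNDAux

variable {n : ℕ}

abbrev E (n : ℕ) := Fin n → ℝ

/-- The linear functional `x ↦ ∑ a i * x i`. -/
def Lf (a x : E n) : ℝ := ∑ i, a i * x i

lemma Lf_zero (a : E n) : Lf a 0 = 0 := by simp [Lf]

lemma Lf_isLinear (a : E n) : IsLinearMap ℝ (Lf a) := by
  constructor
  · intro x y
    simp only [Lf, Pi.add_apply, mul_add, Finset.sum_add_distrib]
  · intro t x
    simp only [Lf, Pi.smul_apply, smul_eq_mul, Finset.mul_sum]
    exact Finset.sum_congr rfl fun i _ => by ring

lemma Lf_sum (a : E n) (F : Finset (E n)) (w : E n → ℝ) :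
    Lf a (∑ y ∈ F, w y • y) = ∑ y ∈ F, w y * Lf a y := by
  let L : E n →ₗ[ℝ] ℝ := IsLinearMap.mk' _ (Lf_isLinear a)
  have : Lf a (∑ y ∈ F, w y • y) = L (∑ y ∈ F, w y • y) := rfl
  rw [this, map_sum]
  exact Finset.sum_congr rfl fun y _ => by
    rw [map_smul]; simp [L, smul_eq_mul]

lemma hull_le {a : E n} {m : ℝ} {S : Set (E n)} (h : ∀ s ∈ S, m ≤ Lf a s) :
    ∀ x ∈ convexHull ℝ S, m ≤ Lf a x := fun _ hx =>
  convexHull_min h (convex_halfSpace_ge (Lf_isLinear a) m) hx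

lemma coord_sum (F : Finset (E n)) (w : E n → ℝ) (j : Fin n) :
    (∑ y ∈ F, w y • y) j = ∑ y ∈ F, w y * y j := by
  rw [Finset.sum_apply]
  exact Finset.sum_congr rfl fun y _ => by simp

lemma pos_zero {F : Finset (E n)} {w g : E n → ℝ} (hw : ∀ y ∈ F, 0 < w y)
    (hg : ∀ y ∈ F, 0 ≤ g y) (h : ∑ y ∈ F, w y * g y ≤ 0) : ∀ y ∈ F, g y = 0 := by
  have hnn : ∀ y ∈ F, 0 ≤ w y * g y := fun y hy => mul_nonneg (hw y hy).le (hg y hy)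
  have hz : ∑ y ∈ F, w y * g y = 0 := le_antisymm h (Finset.sum_nonneg hnn)
  intro y hy
  have := (Finset.sum_eq_zero_iff_of_nonneg hnn).mp hz y hy
  rcases mul_eq_zero.mp this with h1 | h1
  · exact absurd h1 (hw y hy).ne'
  · exact h1

lemma rep {S : Set (E n)} (hS : S.Finite) {x : E n} (hx : x ∈ convexHull ℝ S) :
    ∃ (F : Finset (E n)) (w : E n → ℝ), ↑F ⊆ S ∧ (∀ y ∈ F, 0 < w y) ∧
      ∑ y ∈ F, w y = 1 ∧ ∑ y ∈ F, w y • y = x := by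
  rw [hS.convexHull_eq] at hx
  obtain ⟨w, hw0, hw1, hcm⟩ := hx
  classical
  refine ⟨hS.toFinset.filter (fun y => w y ≠ 0), w, ?_, ?_, ?_, ?_⟩
  · intro y hy
    simp only [Finset.coe_filter, Set.mem_setOf_eq, Set.Finite.mem_toFinset] at hy
    exact hy.1
  · intro y hy
    simp only [Finset.mem_filter, Set.Finite.mem_toFinset] at hy
    exact lt_of_le_of_ne (hw0 y hy.1) (Ne.symm hy.2)
  · rw [Finset.sum_filter_ne_zero]; exact hw1
  · rw [Finset.sum_subset (Finset.filter_subset _ _) (fun y hy hny => ?_)]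
    · rw [Finset.centerMass_eq_of_sum_1 _ _ hw1] at hcm
      simpa using hcm
    · have : w y = 0 := by
        by_contra h
        exact hny (Finset.mem_filter.mpr ⟨hy, h⟩)
      simp [this]

lemma mem_hull_of_sum {F : Finset (E n)} {w : E n → ℝ} {S : Set (E n)}
    (hFS : ↑F ⊆ S) (hw0 : ∀ y ∈ F, 0 ≤ w y) (hw1 : ∑ y ∈ F, w y = 1) :
    (∑ y ∈ F, w y • y) ∈ convexHull ℝ S := by
  have h := Finset.centerMass_mem_convexHull F hw0 (by rw [hw1]; norm_num)
    (fun y hy => hFS hy)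
  rw [Finset.centerMass_eq_of_sum_1 _ _ hw1] at h
  simpa using h

end NNDAux
namespace NNDAux

lemma diff_finset_prod {n : ℕ} {ι : Type*} (u : Finset ι) (f : ι → (Fin n → ℂ) → ℂ)
    (h : ∀ i ∈ u, Differentiable ℝ (f i)) :
    Differentiable ℝ (fun z => ∏ i ∈ u, f i z) := by
  classical
  induction u using Finset.induction_on with
  | empty => simpa using differentiable_const (1 : ℂ)
  | insert a s hni ih =>
    simp only [Finset.prod_insert hni]
    exact (h a (Finset.mem_insert_self a s)).mul
      (ih fun i hi => h i (Finset.mem_insert_of_mem hi))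

lemma diff_proj {n : ℕ} (i : Fin n) : Differentiable ℝ (fun z : Fin n → ℂ => z i) :=
  (ContinuousLinearMap.proj (R := ℝ) (φ := fun _ : Fin n => ℂ) i).differentiable

lemma diff_conj_proj {n : ℕ} (i : Fin n) :
    Differentiable ℝ (fun z : Fin n → ℂ => (starRingEnd ℂ) (z i)) := by
  have h := Complex.conjCLE.differentiable.comp (diff_proj i)
  exact h

lemma diff_eval {n : ℕ} (g : MixedCoeff n) : Differentiable ℝ (Mixed.eval g) := by
  have he : Mixed.eval g = fun z => ∑ p ∈ g.support,
      g p * (∏ i, z i ^ p.1 i) * ∏ i, (starRingEnd ℂ) (z i) ^ p.2 i := rfl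
  rw [he]
  apply Differentiable.fun_sum
  intro p _
  exact (((diff_finset_prod Finset.univ _ (fun i _ => (diff_proj i).pow (p.1 i))).const_mul
    (g p)).mul (diff_finset_prod Finset.univ _ (fun i _ => (diff_conj_proj i).pow (p.2 i))))

lemma eval_congr_on {n : ℕ} (g : MixedCoeff n) (I : Finset (Fin n))
    (hg : ∀ p, g p ≠ 0 → ∀ j ∉ I, p.1 j = 0 ∧ p.2 j = 0) {z w : Fin n → ℂ}
    (h : ∀ i ∈ I, z i = w i) : Mixed.eval g z = Mixed.eval g w := by
  apply Finsupp.sum_congr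
  intro p hp
  have hp' := Finsupp.mem_support_iff.mp hp
  have h1 : (∏ i, z i ^ p.1 i) = ∏ i, w i ^ p.1 i := by
    refine Finset.prod_congr rfl fun i _ => ?_
    by_cases hi : i ∈ I
    · rw [h i hi]
    · rw [(hg p hp' i hi).1]; simp
  have h2 : (∏ i, (starRingEnd ℂ) (z i) ^ p.2 i) = ∏ i, (starRingEnd ℂ) (w i) ^ p.2 i := by
    refine Finset.prod_congr rfl fun i _ => ?_
    by_cases hi : i ∈ I
    · rw [h i hi]
    · rw [(hg p hp' i hi).2]; simp
  rw [h1, h2]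

end NNDAux
open NNDAux in
theorem newton_nondeg_restriction {n : ℕ} (c : MixedCoeff n) (hnd : Mixed.NewtonNonDeg c)
    (I : Finset (Fin n)) (hI : I.Nonempty) (cI : MixedCoeff n)
    (hcI : cI = @Finsupp.filter _ _ _ (fun p => ∀ j ∉ I, p.1 j = 0 ∧ p.2 j = 0)
      (Classical.decPred _) c)
    (hnz : ∃ z : Fin n → ℂ, (∀ j ∉ I, z j = 0) ∧ Mixed.eval c z ≠ 0) :
    (∀ Δ, Mixed.IsGammaPlusFace cI Δ →
      ∀ z : coordSubspace I, (∀ i ∈ I, (z : Fin n → ℂ) i ≠ 0) →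
        Mixed.eval (Mixed.trunc cI Δ) (z : Fin n → ℂ) = 0 →
        Function.Surjective
          ⇑(fderiv ℝ (fun w : coordSubspace I => Mixed.eval (Mixed.trunc cI Δ) (w : Fin n → ℂ)) z)) ∧
    Mixed.GammaPlusSet cI = Mixed.GammaPlusSet c ∩
      {x : Fin n → ℝ | (∀ j ∉ I, x j = 0) ∧ ∀ i, 0 ≤ x i} := by
  classical
  -- basic facts about cI
  have hcIapp : ∀ p, cI p ≠ 0 → c p ≠ 0 ∧ ∀ j ∉ I, p.1 j = 0 ∧ p.2 j = 0 := by
    intro p hp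
    rw [hcI, Finsupp.filter_apply] at hp
    split_ifs at hp with h
    · exact ⟨hp, h⟩
    · exact absurd rfl hp
  have hcIapp' : ∀ p, (∀ j ∉ I, p.1 j = 0 ∧ p.2 j = 0) → cI p = c p := by
    intro p h
    rw [hcI, Finsupp.filter_apply, if_pos h]
  -- finiteness
  have hfinS : (Mixed.suppPts c).Finite := (c.support.finite_toSet).image _
  have hfinSI : (Mixed.suppPts cI).Finite := (cI.support.finite_toSet).image _
  have hfinS0 : (insert (0 : Fin n → ℝ) (Mixed.suppPts c)).Finite := hfinS.insert _
  -- memberships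
  have hzeroC : (0 : Fin n → ℝ) ∈ Mixed.Gamma0 c :=
    subset_convexHull ℝ _ (Set.mem_insert _ _)
  have hzeroCI : (0 : Fin n → ℝ) ∈ Mixed.Gamma0 cI :=
    subset_convexHull ℝ _ (Set.mem_insert _ _)
  have hsuppmono : Mixed.suppPts cI ⊆ Mixed.suppPts c := by
    rintro x ⟨p, hp, rfl⟩
    refine ⟨p, ?_, rfl⟩
    have := hcIapp p (by simpa using hp)
    simpa using this.1
  have hmono : Mixed.Gamma0 cI ⊆ Mixed.Gamma0 c :=
    convexHull_mono (Set.insert_subset_insert hsuppmono)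
  have hIsupp : ∀ x ∈ Mixed.suppPts cI, (∀ j ∉ I, x j = 0) ∧ ∀ i, 0 ≤ x i := by
    rintro x ⟨p, hp, rfl⟩
    have h := (hcIapp p (by simpa using hp)).2
    constructor
    · intro j hj
      show ((p.1 j + p.2 j : ℕ) : ℝ) = 0
      rw [(h j hj).1, (h j hj).2]
      norm_num
    · intro i
      exact Nat.cast_nonneg _
  have hnnS : ∀ x ∈ Mixed.suppPts c, ∀ i, 0 ≤ x i := by
    rintro x ⟨p, hp, rfl⟩ i
    exact Nat.cast_nonneg _
  have hGood : Convex ℝ {x : Fin n → ℝ | (∀ j ∉ I, x j = 0) ∧ ∀ i, 0 ≤ x i} := by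
    intro x hx y hy s t hs ht hst
    constructor
    · intro j hj
      simp [Pi.add_apply, Pi.smul_apply, hx.1 j hj, hy.1 j hj]
    · intro i
      have : (s • x + t • y) i = s * x i + t * y i := by simp
      rw [this]
      exact add_nonneg (mul_nonneg hs (hx.2 i)) (mul_nonneg ht (hy.2 i))
  have hCIgood : Mixed.Gamma0 cI ⊆ {x : Fin n → ℝ | (∀ j ∉ I, x j = 0) ∧ ∀ i, 0 ≤ x i} := by
    apply convexHull_min _ hGood
    rintro x (rfl | hx)
    · exact ⟨fun j _ => rfl, fun i => le_refl 0⟩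
    · exact hIsupp x hx
  have hback : ∀ x ∈ Mixed.suppPts c, (∀ j ∉ I, x j = 0) → x ∈ Mixed.suppPts cI := by
    rintro x ⟨p, hp, rfl⟩ hx
    refine ⟨p, ?_, rfl⟩
    have hc : c p ≠ 0 := by simpa using hp
    have hIp : ∀ j ∉ I, p.1 j = 0 ∧ p.2 j = 0 := by
      intro j hj
      have h1' : ((p.1 j + p.2 j : ℕ) : ℝ) = 0 := hx j hj
      have h2 : p.1 j + p.2 j = 0 := by exact_mod_cast h1'
      omega
    simp only [Finset.mem_coe, Finsupp.mem_support_iff]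
    rw [hcIapp' p hIp]
    exact hc
  -- the key face lifting lemma
  have keyface : ∀ Δ, Mixed.IsGammaPlusFace cI Δ →
      Mixed.IsGammaPlusFace c Δ ∧
        Δ ⊆ {x : Fin n → ℝ | (∀ j ∉ I, x j = 0) ∧ ∀ i, 0 ≤ x i} := by
    rintro Δ ⟨⟨hne, hface⟩, h0⟩
    rcases hface with rfl | ⟨a, hΔ⟩
    · exact absurd hzeroCI h0
    have hΔL : Δ = {x ∈ Mixed.Gamma0 cI | ∀ y ∈ Mixed.Gamma0 cI, Lf a x ≤ Lf a y} := hΔ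
    obtain ⟨x₀, hx₀⟩ := hne
    rw [hΔL] at hx₀
    obtain ⟨hx₀C, hx₀m⟩ := hx₀
    set m := Lf a x₀ with hm_def
    have hm_le0 : m ≤ 0 := by
      have := hx₀m 0 hzeroCI
      rwa [Lf_zero] at this
    have hm : m < 0 := by
      rcases lt_or_eq_of_le hm_le0 with h | h
      · exact h
      · exfalso
        apply h0
        rw [hΔL]
        exact ⟨hzeroCI, fun y hy => by rw [Lf_zero, ← h]; exact hx₀m y hy⟩
    obtain ⟨B, hB⟩ : ∃ B, ∀ s ∈ Mixed.suppPts c, B ≤ Lf a s := by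
      obtain ⟨B, hB⟩ := (hfinS.image (Lf a)).bddBelow
      exact ⟨B, fun s hs => hB (Set.mem_image_of_mem _ hs)⟩
    set M := max (1 - m - B) 1 with hM_def
    have hM1 : (1 : ℝ) ≤ M := le_max_right _ _
    have hM0 : (0 : ℝ) ≤ M := by linarith
    set a' : Fin n → ℝ := fun i => a i + (if i ∈ I then 0 else M) with ha'_def
    have hLa' : ∀ x : Fin n → ℝ,
        Lf a' x = Lf a x + ∑ i, (if i ∈ I then 0 else M) * x i := by
      intro x
      simp only [Lf, a', add_mul, Finset.sum_add_distrib]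
    have hLa'I : ∀ x : Fin n → ℝ, (∀ j ∉ I, x j = 0) → Lf a' x = Lf a x := by
      intro x hx
      rw [hLa']
      have : ∑ i, (if i ∈ I then 0 else M) * x i = 0 := by
        apply Finset.sum_eq_zero
        intro i _
        by_cases hi : i ∈ I
        · simp [hi]
        · simp [hi, hx i hi]
      rw [this, add_zero]
    have hstrict : ∀ s ∈ Mixed.suppPts c, s ∉ Mixed.suppPts cI → 1 - m ≤ Lf a' s := by
      rintro s hs hns
      obtain ⟨p, hp, rfl⟩ := hs
      have hj : ∃ j ∉ I, p.1 j + p.2 j ≠ 0 := by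
        by_contra h
        push_neg at h
        apply hns
        apply hback _ ⟨p, hp, rfl⟩
        intro j hj'
        show ((p.1 j + p.2 j : ℕ) : ℝ) = 0
        rw [h j hj']
        norm_num
      obtain ⟨j, hjI, hjne⟩ := hj
      have hterm : M ≤ ∑ i, (if i ∈ I then 0 else M) * (Mixed.suppPt p) i := by
        have h1 : M * 1 ≤ (if j ∈ I then 0 else M) * (Mixed.suppPt p) j := by
          rw [if_neg hjI]
          apply mul_le_mul_of_nonneg_left _ hM0
          show (1 : ℝ) ≤ ((p.1 j + p.2 j : ℕ) : ℝ)
          exact_mod_cast Nat.one_le_iff_ne_zero.mpr hjne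
        calc M = M * 1 := (mul_one M).symm
        _ ≤ (if j ∈ I then 0 else M) * (Mixed.suppPt p) j := h1
        _ ≤ ∑ i, (if i ∈ I then 0 else M) * (Mixed.suppPt p) i := by
            apply Finset.single_le_sum (f := fun i => (if i ∈ I then 0 else M) * (Mixed.suppPt p) i)
              _ (Finset.mem_univ j)
            intro i _
            apply mul_nonneg _ (Nat.cast_nonneg _)
            by_cases hi : i ∈ I <;> simp [hi, hM0]
      have hb := hB _ ⟨p, hp, rfl⟩
      rw [hLa']
      have : 1 - m - B ≤ M := le_max_left _ _
      linarith
    have hS0' : ∀ s ∈ insert (0 : Fin n → ℝ) (Mixed.suppPts c), m ≤ Lf a' s := by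
      rintro s (rfl | hs)
      · rw [Lf_zero]; exact hm.le
      · by_cases hsI : s ∈ Mixed.suppPts cI
        · rw [hLa'I s (hIsupp s hsI).1]
          exact hx₀m s (subset_convexHull ℝ _ (Set.mem_insert_of_mem _ hsI))
        · linarith [hstrict s hs hsI]
    have hCle : ∀ y ∈ Mixed.Gamma0 c, m ≤ Lf a' y := fun y hy => hull_le hS0' y hy
    have hΔeq : Δ = {x ∈ Mixed.Gamma0 c | ∀ y ∈ Mixed.Gamma0 c, Lf a' x ≤ Lf a' y} := by
      apply Set.Subset.antisymm
      · intro x hx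
        rw [hΔL] at hx
        obtain ⟨hxC, hxm⟩ := hx
        have hxI := hCIgood hxC
        have hxv : Lf a x = m := le_antisymm (hxm x₀ hx₀C) (hx₀m x hxC)
        refine ⟨hmono hxC, fun y hy => ?_⟩
        rw [hLa'I x hxI.1, hxv]
        exact hCle y hy
      · rintro x ⟨hxC, hxmin⟩
        have hx₀I := hCIgood hx₀C
        have hle : Lf a' x ≤ m := by
          have := hxmin x₀ (hmono hx₀C)
          rwa [hLa'I x₀ hx₀I.1] at this
        obtain ⟨F, w, hFS, hw, hw1, hsum⟩ := rep hfinS0 hxC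
        have hyall : ∀ y ∈ F, Lf a' y = m := by
          have hs' : ∑ y ∈ F, w y * (Lf a' y - m) = Lf a' x - m := by
            calc ∑ y ∈ F, w y * (Lf a' y - m)
                = (∑ y ∈ F, w y * Lf a' y) - (∑ y ∈ F, w y) * m := by
                  rw [Finset.sum_mul]
                  rw [← Finset.sum_sub_distrib]
                  exact Finset.sum_congr rfl fun y _ => by ring
            _ = Lf a' x - m := by rw [hw1, one_mul, ← Lf_sum a' F w, hsum]
          have h0' : ∑ y ∈ F, w y * (Lf a' y - m) ≤ 0 := by rw [hs']; linarith
          intro y hy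
          have := pos_zero hw (fun y hy => sub_nonneg.mpr (hS0' y (hFS hy))) h0' y hy
          linarith
        have hyT : ∀ y ∈ F, y ∈ Mixed.suppPts cI := by
          intro y hy
          rcases hFS hy with rfl | hyS
          · exfalso
            have := hyall _ hy
            rw [Lf_zero] at this
            linarith
          · by_contra hns
            have h1 := hstrict y hyS hns
            have h2 := hyall y hy
            linarith
        have hxCI : x ∈ Mixed.Gamma0 cI := by
          rw [← hsum]
          exact mem_hull_of_sum
            (fun y hy => Set.mem_insert_of_mem _ (hyT y hy))
            (fun y hy => (hw y hy).le) hw1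
        have hxI : ∀ j ∉ I, x j = 0 := by
          intro j hj
          rw [← hsum, coord_sum]
          apply Finset.sum_eq_zero
          intro y hy
          rw [(hIsupp y (hyT y hy)).1 j hj, mul_zero]
        have hxm' : Lf a' x = m := le_antisymm hle (hCle x hxC)
        have hxm : Lf a x = m := by rw [← hLa'I x hxI]; exact hxm'
        rw [hΔL]
        exact ⟨hxCI, fun y hy => by rw [hxm]; exact hx₀m y hy⟩
    refine ⟨⟨⟨⟨x₀, by rw [hΔL]; exact ⟨hx₀C, hx₀m⟩⟩, Or.inr ⟨a', hΔeq⟩⟩, h0⟩, ?_⟩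
    intro x hx
    rw [hΔL] at hx
    exact hCIgood hx.1
  constructor
  · -- Part 1
    intro Δ hΔface z hz hz0
    obtain ⟨hΔc, hΔgood⟩ := keyface Δ hΔface
    have htr : Mixed.trunc cI Δ = Mixed.trunc c Δ := by
      ext p
      show (Finsupp.filter _ cI) p = (Finsupp.filter _ c) p
      rw [Finsupp.filter_apply, Finsupp.filter_apply]
      by_cases hp : Mixed.suppPt p ∈ Δ
      · rw [if_pos hp, if_pos hp]
        apply hcIapp'
        intro j hj
        have h1' : ((p.1 j + p.2 j : ℕ) : ℝ) = 0 := (hΔgood hp).1 j hj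
        have h2 : p.1 j + p.2 j = 0 := by exact_mod_cast h1'
        omega
      · rw [if_neg hp, if_neg hp]
    set g := Mixed.trunc cI Δ with hg_def
    have hgsupp : ∀ p, g p ≠ 0 → ∀ j ∉ I, p.1 j = 0 ∧ p.2 j = 0 := by
      intro p hp
      have hp' : cI p ≠ 0 := by
        rw [hg_def] at hp
        show ¬ _
        intro h
        apply hp
        show (Finsupp.filter _ cI) p = 0
        rw [Finsupp.filter_apply]
        split_ifs <;> simp [h]
      exact (hcIapp p hp').2
    have hz0' : ∀ j ∉ I, (z : Fin n → ℂ) j = 0 := by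
      intro j hj
      have h := Submodule.mem_pi.mp z.2 j (by simpa using hj)
      simpa using h
    set zt : Fin n → ℂ := fun i => if i ∈ I then (z : Fin n → ℂ) i else 1 with hzt_def
    have hztne : ∀ i, zt i ≠ 0 := by
      intro i
      by_cases hi : i ∈ I
      · simpa [zt, hi] using hz i hi
      · simp [zt, hi]
    have hzt_eq : ∀ i ∈ I, zt i = (z : Fin n → ℂ) i := fun i hi => by simp [zt, hi]
    have heval : Mixed.eval g zt = 0 := by
      rw [eval_congr_on g I hgsupp hzt_eq]
      exact hz0
    have hns := hnd Δ hΔc zt hztne (by rw [← htr]; exact heval)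
    have hsurj : Function.Surjective ⇑(fderiv ℝ (Mixed.eval g) zt) := by
      rw [htr]
      exact not_not.mp hns
    -- projection
    set Pl : (Fin n → ℂ) →L[ℝ] (Fin n → ℂ) :=
      ContinuousLinearMap.pi (fun i => if i ∈ I then ContinuousLinearMap.proj i else 0)
      with hPl_def
    have hPl : ∀ (v : Fin n → ℂ) i, Pl v i = if i ∈ I then v i else 0 := by
      intro v i
      rw [hPl_def, ContinuousLinearMap.pi_apply]
      by_cases hi : i ∈ I <;> simp [hi]
    have hd := diff_eval g
    have hPeq : Mixed.eval g = fun v => Mixed.eval g (Pl v) := by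
      funext v
      exact eval_congr_on g I hgsupp (fun i hi => by rw [hPl v i, if_pos hi])
    have hfd : ∀ v, fderiv ℝ (Mixed.eval g) v = (fderiv ℝ (Mixed.eval g) (Pl v)).comp Pl := by
      intro v
      conv_lhs => rw [hPeq]
      rw [show (fun v => Mixed.eval g (Pl v)) = (Mixed.eval g) ∘ ⇑Pl from rfl]
      rw [fderiv_comp v (hd (Pl v)) (Pl.differentiable.differentiableAt), Pl.fderiv]
    have hPlz : Pl zt = (z : Fin n → ℂ) := by
      funext i
      rw [hPl]
      by_cases hi : i ∈ I
      · simp [zt, hi]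
      · rw [if_neg hi, hz0' i hi]
    have hDsur : Function.Surjective ⇑(fderiv ℝ (Mixed.eval g) ((z : Fin n → ℂ))) := by
      have h1 := hfd zt
      rw [hPlz] at h1
      rw [h1] at hsurj
      rw [ContinuousLinearMap.coe_comp'] at hsurj
      exact hsurj.of_comp
    have hfix : Pl ((z : Fin n → ℂ)) = (z : Fin n → ℂ) := by
      funext i
      rw [hPl]
      by_cases hi : i ∈ I
      · rw [if_pos hi]
      · rw [if_neg hi, hz0' i hi]
    have hDP : fderiv ℝ (Mixed.eval g) ((z : Fin n → ℂ)) =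
        (fderiv ℝ (Mixed.eval g) ((z : Fin n → ℂ))).comp Pl := by
      have h1 := hfd ((z : Fin n → ℂ))
      rwa [hfix] at h1
    have hrestr : (fun w : coordSubspace I => Mixed.eval g (w : Fin n → ℂ)) =
        (Mixed.eval g) ∘ ⇑((coordSubspace I).subtypeL) := rfl
    rw [hrestr, fderiv_comp z (hd _)
      (((coordSubspace I).subtypeL).differentiable.differentiableAt),
      ContinuousLinearMap.fderiv]
    intro v
    obtain ⟨u, hu⟩ := hDsur v
    have hmem : Pl u ∈ coordSubspace I := by
      apply Submodule.mem_pi.mpr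
      intro j hj
      have hjI : j ∉ I := by simpa using hj
      rw [hPl, if_neg hjI]
      simp
    refine ⟨⟨Pl u, hmem⟩, ?_⟩
    show (fderiv ℝ (Mixed.eval g) (((coordSubspace I).subtypeL) z)) (Pl u) = v
    calc (fderiv ℝ (Mixed.eval g) (((coordSubspace I).subtypeL) z)) (Pl u)
        = ((fderiv ℝ (Mixed.eval g) ((z : Fin n → ℂ))).comp Pl) u := rfl
    _ = (fderiv ℝ (Mixed.eval g) ((z : Fin n → ℂ))) u := by rw [← hDP]
    _ = v := hu
  · -- Part 2
    ext x
    simp only [Set.mem_inter_iff, Set.mem_setOf_eq]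
    constructor
    · rintro ⟨Δ, hΔf, hxΔ⟩
      obtain ⟨hΔc, hΔgood⟩ := keyface Δ hΔf
      exact ⟨⟨Δ, hΔc, hxΔ⟩, hΔgood hxΔ⟩
    · rintro ⟨⟨Δ, ⟨⟨hne, hface⟩, h0⟩, hxΔ⟩, hxI, hxnn⟩
      rcases hface with rfl | ⟨a, hΔ⟩
      · exact absurd hzeroC h0
      have hΔL : Δ = {x ∈ Mixed.Gamma0 c | ∀ y ∈ Mixed.Gamma0 c, Lf a x ≤ Lf a y} := hΔ
      rw [hΔL] at hxΔ
      obtain ⟨hxC, hxm⟩ := hxΔ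
      set m := Lf a x with hm_def
      have hm_le0 : m ≤ 0 := by
        have := hxm 0 hzeroC
        rwa [Lf_zero] at this
      have hm : m < 0 := by
        rcases lt_or_eq_of_le hm_le0 with h | h
        · exact h
        · exfalso
          apply h0
          rw [hΔL]
          exact ⟨hzeroC, fun y hy => by rw [Lf_zero, ← h]; exact hxm y hy⟩
      obtain ⟨F, w, hFS, hw, hw1, hsum⟩ := rep hfinS0 hxC
      have hSle : ∀ y ∈ insert (0 : Fin n → ℝ) (Mixed.suppPts c), m ≤ Lf a y :=
        fun y hy => hxm y (subset_convexHull ℝ _ hy)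
      have hyall : ∀ y ∈ F, Lf a y = m := by
        have hs' : ∑ y ∈ F, w y * (Lf a y - m) = Lf a x - m := by
          calc ∑ y ∈ F, w y * (Lf a y - m)
              = (∑ y ∈ F, w y * Lf a y) - (∑ y ∈ F, w y) * m := by
                rw [Finset.sum_mul, ← Finset.sum_sub_distrib]
                exact Finset.sum_congr rfl fun y _ => by ring
          _ = Lf a x - m := by rw [hw1, one_mul, ← Lf_sum a F w, hsum]
        have h0' : ∑ y ∈ F, w y * (Lf a y - m) ≤ 0 := by rw [hs']; linarith
        intro y hy
        have := pos_zero hw (fun y hy => sub_nonneg.mpr (hSle y (hFS hy))) h0' y hy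
        linarith
      have hyI : ∀ y ∈ F, ∀ j ∉ I, y j = 0 := by
        intro y hy j hj
        have hnn : ∀ y' ∈ F, 0 ≤ y' j := by
          intro y' hy'
          rcases hFS hy' with rfl | hyS
          · exact le_refl 0
          · exact hnnS y' hyS j
        have h0' : ∑ y' ∈ F, w y' * y' j ≤ 0 := by
          rw [← coord_sum, hsum, hxI j hj]
        exact pos_zero hw hnn h0' y hy
      have hyT : ∀ y ∈ F, y ∈ Mixed.suppPts cI := by
        intro y hy
        rcases hFS hy with rfl | hyS
        · exfalso
          have := hyall _ hy
          rw [Lf_zero] at this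
          linarith
        · exact hback y hyS (hyI y hy)
      have hxCI : x ∈ Mixed.Gamma0 cI := by
        rw [← hsum]
        exact mem_hull_of_sum
          (fun y hy => Set.mem_insert_of_mem _ (hyT y hy))
          (fun y hy => (hw y hy).le) hw1
      refine ⟨{x' ∈ Mixed.Gamma0 cI | ∀ y ∈ Mixed.Gamma0 cI, Lf a x' ≤ Lf a y},
        ⟨⟨⟨x, ⟨hxCI, fun y hy => hxm y (hmono hy)⟩⟩, Or.inr ⟨a, rfl⟩⟩, ?_⟩,
        ⟨hxCI, fun y hy => hxm y (hmono hy)⟩⟩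
      rintro ⟨h1, h2⟩
      have := h2 x hxCI
      rw [Lf_zero] at this
      linarith
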